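/- Let g : ℝ² → ℝ be the radial convex function g(x) = F(‖x‖), and let X : [0,∞) → ℝ² be a continuously differentiable solution of the gradient flow Ẋ(t) = −∇g(X(t)) with initial condition 0 < ‖X(0)‖ ≤ e⁻². Then X(t) moves along the ray through X(0) toward the origin, reaches the origin in finite time (there exists T < ∞ with X(T) = 0), and the trajectory has finite path length ∫₀^T ‖Ẋ(t)‖ dt = ‖X(0)‖. -/

import Mathlib

open Set Real MeasureTheory intervalIntegral
open scoped RealInnerProductSpace InnerProductSpace

noncomputable def F (r : ℝ) : ℝ :=
  if r ≤ Real.exp (-2) then ∫ u in (0:ℝ)..r, 1 / (-Real.log u)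
  else (∫ u in (0:ℝ)..Real.exp (-2), 1 / (-Real.log u)) + (1/2) * (r - Real.exp (-2))

noncomputable def gRad (x : EuclideanSpace ℝ (Fin 2)) : ℝ := F ‖x‖

namespace GFaux

noncomputable abbrev c : ℝ := Real.exp (-2)

lemma c_pos : 0 < c := Real.exp_pos _
lemma c_lt_one : c < 1 := by
  rw [Real.exp_lt_one_iff]; norm_num
lemma log_c : Real.log c = -2 := Real.log_exp _

noncomputable def ft (u : ℝ) : ℝ := if u ≤ c then (-Real.log u)⁻¹ else 1/2

lemma ft_eq {u : ℝ} (hu : u ≤ c) : ft u = (-Real.log u)⁻¹ := if_pos hu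

lemma neg_log_ge_two {u : ℝ} (h0 : 0 < u) (h1 : u ≤ c) : 2 ≤ -Real.log u := by
  have := Real.log_le_log h0 h1
  rw [log_c] at this; linarith

lemma neg_log_pos {u : ℝ} (h0 : 0 < u) (h1 : u ≤ c) : 0 < -Real.log u := by
  have := neg_log_ge_two h0 h1; linarith

lemma ft_zero : ft 0 = 0 := by
  rw [ft_eq c_pos.le]; simp

lemma ft_nonneg {u : ℝ} (hu : 0 ≤ u) : 0 ≤ ft u := by
  unfold ft; split_ifs with h
  · rcases hu.eq_or_lt with h0 | h0
    · simp [← h0]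
    · exact (inv_pos.mpr (neg_log_pos h0 h)).le
  · norm_num

lemma ft_c : ft c = 1/2 := by
  rw [ft_eq le_rfl, log_c]; norm_num

lemma ft_le_half {u : ℝ} (hu : 0 ≤ u) : ft u ≤ 1/2 := by
  unfold ft; split_ifs with h
  · rcases hu.eq_or_lt with h0 | h0
    · simp [← h0]
    · have h2 := neg_log_ge_two h0 h
      rw [one_div]
      exact inv_anti₀ (by norm_num) h2
  · exact le_rfl

lemma ft_mono : MonotoneOn ft (Ici 0) := by
  intro u hu v hv huv
  by_cases hvc : v ≤ c
  · have huc : u ≤ c := huv.trans hvc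
    rw [ft_eq huc, ft_eq hvc]
    rcases (Set.mem_Ici.mp hu).eq_or_lt with h0 | h0
    · rw [← h0]; simp only [Real.log_zero, neg_zero, inv_zero]
      rcases (h0.le.trans huv).eq_or_lt with h1 | h1
      · rw [← h1]; simp
      · exact (inv_pos.mpr (neg_log_pos h1 hvc)).le
    · have hv0 : 0 < v := lt_of_lt_of_le h0 huv
      exact inv_anti₀ (neg_log_pos hv0 hvc) (by
        have := Real.log_le_log h0 huv; linarith)
  · have : ft v = 1/2 := if_neg hvc
    rw [this]; exact ft_le_half hu

lemma ft_measurable : Measurable ft := by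
  unfold ft
  exact Measurable.ite measurableSet_Iic (Real.measurable_log.neg.inv) measurable_const

lemma ft_intInt {a b : ℝ} (ha : 0 ≤ a) (hb : 0 ≤ b) : IntervalIntegrable ft volume a b := by
  apply MonotoneOn.intervalIntegrable
  exact ft_mono.mono (by
    intro u hu
    rcases mem_uIcc.mp hu with h | h
    · exact ha.trans h.1
    · exact hb.trans h.1)

lemma F_eq {r : ℝ} (hr : 0 ≤ r) : F r = ∫ u in (0:ℝ)..r, ft u := by
  unfold F
  split_ifs with h
  · apply intervalIntegral.integral_congr
    intro u hu
    rw [uIcc_of_le hr] at hu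
    show 1 / -Real.log u = ft u
    rw [ft_eq (hu.2.trans h), one_div]
  · push_neg at h
    have h1 : (∫ u in (0:ℝ)..c, 1 / (-Real.log u)) = ∫ u in (0:ℝ)..c, ft u := by
      apply intervalIntegral.integral_congr
      intro u hu
      rw [uIcc_of_le c_pos.le] at hu
      show 1 / -Real.log u = ft u
      rw [ft_eq hu.2, one_div]
    have h2 : (∫ u in (0:ℝ)..r, ft u)
        = (∫ u in (0:ℝ)..c, ft u) + ∫ u in c..r, ft u :=
      (intervalIntegral.integral_add_adjacent_intervals (ft_intInt le_rfl c_pos.le)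
        (ft_intInt c_pos.le hr)).symm
    have h3 : (∫ u in c..r, ft u) = ∫ u in c..r, (1/2 : ℝ) := by
      apply intervalIntegral.integral_congr
      intro u hu
      rw [uIcc_of_le h.le] at hu
      unfold ft
      split_ifs with h4
      · have : u = c := le_antisymm h4 hu.1
        rw [this, Real.log_exp]; norm_num
      · rfl
    rw [h2, h3, h1, intervalIntegral.integral_const]
    ring_nf

lemma F_zero : F 0 = 0 := by
  rw [F_eq le_rfl, intervalIntegral.integral_same]

lemma F_hasDerivAt {r : ℝ} (hr : 0 < r) : HasDerivAt F (ft r) r := by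
  have hcont : ContinuousAt ft r := by
    rcases lt_trichotomy r c with h | h | h
    · have hev : (fun u => (-Real.log u)⁻¹) =ᶠ[nhds r] ft := by
        filter_upwards [Iio_mem_nhds h] with u hu
        rw [ft_eq (le_of_lt hu)]
      apply ContinuousAt.congr _ hev
      exact (Real.continuousAt_log hr.ne').neg.inv₀ (neg_log_pos hr h.le).ne'
    · subst h
      rw [← continuousWithinAt_univ, ← Iic_union_Ici (a := c)]
      apply ContinuousWithinAt.union
      · apply ContinuousWithinAt.congr
          (f := fun u => (-Real.log u)⁻¹)
        · exact ((Real.continuousAt_log hr.ne').neg.inv₀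
            (neg_log_pos hr le_rfl).ne').continuousWithinAt
        · intro u hu; rw [ft_eq hu]
        · rw [ft_eq le_rfl]
      · apply ContinuousWithinAt.congr (f := fun _ => (1/2 : ℝ))
        · exact continuousWithinAt_const
        · intro u hu
          unfold ft; split_ifs with h4
          · have : u = c := le_antisymm h4 hu
            rw [this, Real.log_exp]; norm_num
          · rfl
        · exact ft_c
    · have hev : (fun _ => (1/2:ℝ)) =ᶠ[nhds r] ft := by
        filter_upwards [Ioi_mem_nhds h] with u hu
        exact (if_neg (not_le.mpr hu)).symm
      exact ContinuousAt.congr continuousAt_const hev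
  have hd : HasDerivAt (fun s => ∫ u in (0:ℝ)..s, ft u) (ft r) r :=
    intervalIntegral.integral_hasDerivAt_right (ft_intInt le_rfl hr.le)
      (ft_measurable.stronglyMeasurable.stronglyMeasurableAtFilter) hcont
  apply hd.congr_of_eventuallyEq
  filter_upwards [Ioi_mem_nhds hr] with s hs
  exact F_eq (le_of_lt hs)

lemma F_nonneg {r : ℝ} (hr : 0 ≤ r) : 0 ≤ F r := by
  rw [F_eq hr]
  apply intervalIntegral.integral_nonneg hr
  intro u hu; exact ft_nonneg hu.1

lemma F_le {r : ℝ} (hr : 0 ≤ r) : F r ≤ r * ft r := by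
  rw [F_eq hr]
  have : (∫ u in (0:ℝ)..r, ft u) ≤ ∫ _u in (0:ℝ)..r, ft r := by
    apply intervalIntegral.integral_mono_on hr (ft_intInt le_rfl hr) intervalIntegrable_const
    intro u hu
    exact ft_mono hu.1 hr hu.2
  simpa using this


abbrev E2 := EuclideanSpace ℝ (Fin 2)

lemma norm_hasFDerivAt {x : E2} (hx : x ≠ 0) :
    HasFDerivAt (fun y : E2 => ‖y‖) (‖x‖⁻¹ • (innerSL ℝ x)) x := by
  have hinner : HasFDerivAt (fun y : E2 => ⟪y, y⟫_ℝ)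
      ((fderivInnerCLM ℝ (x, x)).comp
        ((ContinuousLinearMap.id ℝ E2).prod (ContinuousLinearMap.id ℝ E2))) x :=
    (hasFDerivAt_id x).inner ℝ (hasFDerivAt_id x)
  have hxx : ⟪x, x⟫_ℝ ≠ 0 := inner_self_ne_zero.mpr hx
  have hs : HasDerivAt Real.sqrt (1 / (2 * Real.sqrt ⟪x, x⟫_ℝ)) ⟪x, x⟫_ℝ :=
    Real.hasDerivAt_sqrt hxx
  have hcomp : HasFDerivAt (fun y : E2 => Real.sqrt ⟪y, y⟫_ℝ)
      ((1 / (2 * Real.sqrt ⟪x, x⟫_ℝ)) • ((fderivInnerCLM ℝ (x, x)).comp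
        ((ContinuousLinearMap.id ℝ E2).prod (ContinuousLinearMap.id ℝ E2)))) x :=
    HasDerivAt.comp_hasFDerivAt (f := fun y : E2 => ⟪y, y⟫_ℝ) x hs hinner
  have hfun : (fun y : E2 => Real.sqrt ⟪y, y⟫_ℝ) = fun y : E2 => ‖y‖ := by
    funext y
    rw [real_inner_self_eq_norm_mul_norm, Real.sqrt_mul_self (norm_nonneg y)]
  rw [hfun] at hcomp
  refine hcomp.congr_fderiv ?_
  have hsq : Real.sqrt ⟪x, x⟫_ℝ = ‖x‖ := by
    rw [real_inner_self_eq_norm_mul_norm, Real.sqrt_mul_self (norm_nonneg x)]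
  ext v
  simp only [ContinuousLinearMap.smul_apply, innerSL_apply_apply, ContinuousLinearMap.comp_apply,
    ContinuousLinearMap.prod_apply, ContinuousLinearMap.id_apply, fderivInnerCLM_apply, hsq,
    smul_eq_mul]
  rw [real_inner_comm v x]
  have h0 : ‖x‖ ≠ 0 := norm_ne_zero_iff.mpr hx
  field_simp
  ring

lemma hasGradientAt_gRad {x : E2} (hx : x ≠ 0) :
    HasGradientAt gRad ((ft ‖x‖ * ‖x‖⁻¹) • x) x := by
  rw [hasGradientAt_iff_hasFDerivAt]
  have h1 : HasDerivAt F (ft ‖x‖) ‖x‖ := F_hasDerivAt (norm_pos_iff.mpr hx)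
  have h2 := norm_hasFDerivAt hx
  have hcomp := h1.comp_hasFDerivAt x h2
  refine hcomp.congr_fderiv (Eq.symm ?_)
  ext v
  simp only [InnerProductSpace.toDual_apply_apply, ContinuousLinearMap.smul_apply, innerSL_apply_apply,
    smul_eq_mul, real_inner_smul_left]
  ring

lemma hasGradientAt_gRad_zero : HasGradientAt gRad (0 : E2) 0 := by
  rw [hasGradientAt_iff_hasFDerivAt]
  rw [map_zero]
  rw [hasFDerivAt_iff_isLittleO_nhds_zero]
  simp only [zero_add, ContinuousLinearMap.zero_apply, sub_zero]
  have hg0 : gRad 0 = 0 := by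
    show F ‖(0 : E2)‖ = 0
    rw [norm_zero, F_zero]
  rw [hg0, Asymptotics.isLittleO_iff]
  intro ε hε
  have hδpos : 0 < min c (Real.exp (-(ε⁻¹))) := lt_min c_pos (Real.exp_pos _)
  filter_upwards [Metric.ball_mem_nhds (0 : E2) hδpos] with h hh
  rw [mem_ball_zero_iff] at hh
  have hn : (0:ℝ) ≤ ‖h‖ := norm_nonneg h
  have hhc : ‖h‖ ≤ c := (lt_min_iff.mp hh).1.le
  have key : ft ‖h‖ ≤ ε := by
    rcases hn.eq_or_lt with h0 | h0
    · rw [← h0, ft_zero]; exact hε.le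
    · rw [ft_eq hhc]
      have hlog : ε⁻¹ < -Real.log ‖h‖ := by
        have h1 : Real.log ‖h‖ < Real.log (Real.exp (-(ε⁻¹))) :=
          Real.log_lt_log h0 (lt_min_iff.mp hh).2
        rw [Real.log_exp] at h1
        linarith
      have hinv : (-Real.log ‖h‖)⁻¹ < (ε⁻¹)⁻¹ :=
        inv_strictAnti₀ (inv_pos.mpr hε) hlog
      rw [inv_inv] at hinv
      exact hinv.le
  have hle : F ‖h‖ ≤ ‖h‖ * ε := (F_le hn).trans (mul_le_mul_of_nonneg_left key hn)
  have : ‖gRad h‖ = F ‖h‖ := by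
    show |F ‖h‖| = F ‖h‖
    exact abs_of_nonneg (F_nonneg hn)
  rw [sub_zero, this]
  calc F ‖h‖ ≤ ‖h‖ * ε := hle
    _ = ε * ‖h‖ := mul_comm _ _

lemma gradient_gRad_zero : gradient gRad (0 : E2) = 0 :=
  hasGradientAt_gRad_zero.gradient

lemma gradient_gRad {x : E2} (hx : x ≠ 0) :
    gradient gRad x = (ft ‖x‖ * ‖x‖⁻¹) • x :=
  (hasGradientAt_gRad hx).gradient

end GFaux

open GFaux in
/-- the gradient flow `Ẋ(t) = −∇g(X(t))` of the radial potential
`g(x) = F(‖x‖)`, started with `0 < ‖X(0)‖ ≤ e⁻²`, moves along the ray through `X(0)`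
toward the origin, reaches the origin in finite time `T`, and has finite path length
`∫₀^T ‖Ẋ(t)‖ dt = ‖X(0)‖`. -/
theorem gradient_flow_radial_finite_time
    (X X' : ℝ → EuclideanSpace ℝ (Fin 2))
    (hX' : ∀ t ≥ (0:ℝ), HasDerivWithinAt X (X' t) (Set.Ici 0) t)
    (hX'cont : ContinuousOn X' (Set.Ici 0))
    (hflow : ∀ t ≥ (0:ℝ), X' t = -gradient gRad (X t))
    (h0 : 0 < ‖X 0‖) (h0' : ‖X 0‖ ≤ Real.exp (-2)) :
    ∃ ρ : ℝ → ℝ, ρ 0 = 1 ∧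
      (∀ t ≥ (0:ℝ), X t = ρ t • X 0) ∧
      (∀ t ≥ (0:ℝ), 0 ≤ ρ t) ∧
      AntitoneOn ρ (Set.Ici 0) ∧
      ∃ T ≥ (0:ℝ), X T = 0 ∧ (∫ t in (0:ℝ)..T, ‖X' t‖) = ‖X 0‖ := by
  have hcontX : ContinuousOn X (Set.Ici 0) := fun t ht => (hX' t ht).continuousWithinAt
  have hX'eq : ∀ t ≥ (0:ℝ), X' t = -((ft ‖X t‖ * ‖X t‖⁻¹) • X t) := by
    intro t ht
    rw [hflow t ht]
    by_cases h : X t = 0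
    · rw [h, gradient_gRad_zero]; simp
    · rw [gradient_gRad h]
  have hκ : ∀ t : ℝ, 0 ≤ ft ‖X t‖ * ‖X t‖⁻¹ :=
    fun t => mul_nonneg (ft_nonneg (norm_nonneg _)) (inv_nonneg.mpr (norm_nonneg _))
  have hXX' : ∀ t ≥ (0:ℝ), ⟪X t, X' t⟫_ℝ = -(ft ‖X t‖ * ‖X t‖⁻¹) * ⟪X t, X t⟫_ℝ := by
    intro t ht
    rw [hX'eq t ht, inner_neg_right, real_inner_smul_right]; ring
  have hX'X0 : ∀ t ≥ (0:ℝ), ⟪X' t, X 0⟫_ℝ = -(ft ‖X t‖ * ‖X t‖⁻¹) * ⟪X t, X 0⟫_ℝ := by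
    intro t ht
    rw [hX'eq t ht, inner_neg_left, real_inner_smul_left]; ring
  have hXd : ∀ t : ℝ, 0 < t → HasDerivAt X (X' t) t := by
    intro t ht
    exact (hX' t ht.le).hasDerivAt (Ici_mem_nhds ht)
  -- q := ⟪X t, X t⟫ is antitone on [0, ∞)
  have hq_deriv : ∀ t : ℝ, 0 < t →
      HasDerivAt (fun s => ⟪X s, X s⟫_ℝ) (⟪X t, X' t⟫_ℝ + ⟪X' t, X t⟫_ℝ) t := by
    intro t ht
    exact (hXd t ht).inner ℝ (hXd t ht)
  have hq_anti : AntitoneOn (fun s => ⟪X s, X s⟫_ℝ) (Set.Ici 0) := by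
    apply antitoneOn_of_deriv_nonpos (convex_Ici 0)
    · exact hcontX.inner hcontX
    · intro t ht
      rw [interior_Ici] at ht
      exact (hq_deriv t ht).differentiableAt.differentiableWithinAt
    · intro t ht
      rw [interior_Ici] at ht
      rw [(hq_deriv t ht).deriv]
      have h1 := hXX' t ht.le
      have h2 : ⟪X' t, X t⟫_ℝ = ⟪X t, X' t⟫_ℝ := real_inner_comm _ _
      rw [h2, h1]
      have h3 : 0 ≤ (ft ‖X t‖ * ‖X t‖⁻¹) * ⟪X t, X t⟫_ℝ :=
        mul_nonneg (hκ t) real_inner_self_nonneg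
      linarith
  have hr_anti : AntitoneOn (fun t => ‖X t‖) (Set.Ici 0) := by
    intro s hs t ht hst
    have h : ⟪X t, X t⟫_ℝ ≤ ⟪X s, X s⟫_ℝ := hq_anti hs ht hst
    rw [real_inner_self_eq_norm_mul_norm, real_inner_self_eq_norm_mul_norm] at h
    show ‖X t‖ ≤ ‖X s‖
    nlinarith [norm_nonneg (X s), norm_nonneg (X t)]
  have hzero_stays : ∀ s ≥ (0:ℝ), X s = 0 → ∀ t ≥ s, X t = 0 := by
    intro s hs h0s t hts
    have h1 : ⟪X t, X t⟫_ℝ ≤ ⟪X s, X s⟫_ℝ := hq_anti hs (hs.trans hts) hts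
    rw [h0s] at h1
    simp only [inner_zero_left] at h1
    have h2 : (0:ℝ) ≤ ⟪X t, X t⟫_ℝ := real_inner_self_nonneg
    have h3 : ⟪X t, X t⟫_ℝ = 0 := le_antisymm h1 h2
    exact inner_self_eq_zero.mp h3
  -- the Cauchy–Schwarz defect ψ vanishes identically
  have hψ_nonneg : ∀ t : ℝ, 0 ≤ ‖X 0‖^2 * ⟪X t, X t⟫_ℝ - ⟪X t, X 0⟫_ℝ^2 := by
    intro t
    have h1 := real_inner_mul_inner_self_le (X t) (X 0)
    have h2 : ⟪X 0, X 0⟫_ℝ = ‖X 0‖^2 := real_inner_self_eq_norm_sq _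
    have h3 : ‖X 0‖^2 * ⟪X t, X t⟫_ℝ = ⟪X t, X t⟫_ℝ * ⟪X 0, X 0⟫_ℝ := by rw [h2]; ring
    nlinarith [h1, h3]
  have hA_deriv : ∀ t : ℝ, 0 < t → HasDerivAt (fun s => ⟪X s, X 0⟫_ℝ) ⟪X' t, X 0⟫_ℝ t := by
    intro t ht
    have h := (hXd t ht).inner ℝ (hasDerivAt_const t (X 0))
    simpa using h
  have hψ_deriv : ∀ t : ℝ, 0 < t →
      HasDerivAt (fun s => ‖X 0‖^2 * ⟪X s, X s⟫_ℝ - ⟪X s, X 0⟫_ℝ^2)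
        (‖X 0‖^2 * (⟪X t, X' t⟫_ℝ + ⟪X' t, X t⟫_ℝ)
          - 2 * ⟪X t, X 0⟫_ℝ * ⟪X' t, X 0⟫_ℝ) t := by
    intro t ht
    have h1 := (hq_deriv t ht).const_mul (‖X 0‖^2)
    have h3 : HasDerivAt (fun s => ⟪X s, X 0⟫_ℝ^2)
        (2 * ⟪X t, X 0⟫_ℝ * ⟪X' t, X 0⟫_ℝ) t := by
      have h := (hA_deriv t ht).pow 2
      refine h.congr_deriv (Eq.symm ?_)
      push_cast
      ring
    exact h1.sub h3
  have hψ_anti : AntitoneOn (fun s => ‖X 0‖^2 * ⟪X s, X s⟫_ℝ - ⟪X s, X 0⟫_ℝ^2)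
      (Set.Ici 0) := by
    apply antitoneOn_of_deriv_nonpos (convex_Ici 0)
    · exact (continuousOn_const.mul (hcontX.inner hcontX)).sub
        ((hcontX.inner continuousOn_const).pow 2)
    · intro t ht
      rw [interior_Ici] at ht
      exact (hψ_deriv t ht).differentiableAt.differentiableWithinAt
    · intro t ht
      rw [interior_Ici] at ht
      rw [(hψ_deriv t ht).deriv]
      have h1 := hXX' t ht.le
      have h2 := hX'X0 t ht.le
      have hcm : ⟪X' t, X t⟫_ℝ = ⟪X t, X' t⟫_ℝ := real_inner_comm _ _
      rw [hcm, h1, h2]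
      have h3 := hψ_nonneg t
      nlinarith [hκ t, h3]
  have hψ_zero : ∀ t ≥ (0:ℝ), ‖X 0‖^2 * ⟪X t, X t⟫_ℝ - ⟪X t, X 0⟫_ℝ^2 = 0 := by
    intro t ht
    have h1 : ‖X 0‖^2 * ⟪X 0, X 0⟫_ℝ - ⟪X 0, X 0⟫_ℝ^2 = 0 := by
      rw [real_inner_self_eq_norm_sq]; ring
    have h2 : ‖X 0‖^2 * ⟪X t, X t⟫_ℝ - ⟪X t, X 0⟫_ℝ^2
        ≤ ‖X 0‖^2 * ⟪X 0, X 0⟫_ℝ - ⟪X 0, X 0⟫_ℝ^2 := hψ_anti self_mem_Ici ht ht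
    exact le_antisymm (by rw [h1] at h2; exact h2) (hψ_nonneg t)
  have hA_sq : ∀ t ≥ (0:ℝ), ⟪X t, X 0⟫_ℝ^2 = (‖X t‖ * ‖X 0‖)^2 := by
    intro t ht
    have h := hψ_zero t ht
    rw [real_inner_self_eq_norm_sq] at h
    nlinarith [h]
  have hA_nonneg : ∀ t ≥ (0:ℝ), 0 ≤ ⟪X t, X 0⟫_ℝ := by
    intro t ht
    by_contra hneg
    push_neg at hneg
    have hA0 : (0:ℝ) < ⟪X 0, X 0⟫_ℝ := by
      rw [real_inner_self_eq_norm_sq]; positivity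
    have hcA : ContinuousOn (fun s => ⟪X s, X 0⟫_ℝ) (Set.Icc 0 t) :=
      (hcontX.inner continuousOn_const).mono (Set.Icc_subset_Ici_self)
    have hmem : (0:ℝ) ∈ Set.Icc (⟪X t, X 0⟫_ℝ) (⟪X 0, X 0⟫_ℝ) := ⟨hneg.le, hA0.le⟩
    obtain ⟨s, hs, hAs⟩ := intermediate_value_Icc' ht hcA hmem
    have hXs : X s = 0 := by
      have h := hA_sq s hs.1
      rw [show ⟪X s, X 0⟫_ℝ = 0 from hAs] at h
      have hns : ‖X s‖ * ‖X 0‖ = 0 := by nlinarith [mul_nonneg (norm_nonneg (X s)) (norm_nonneg (X 0))]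
      rcases mul_eq_zero.mp hns with h' | h'
      · exact norm_eq_zero.mp h'
      · exact absurd h' h0.ne'
    have hXt : X t = 0 := hzero_stays s hs.1 hXs t hs.2
    rw [hXt] at hneg
    simp at hneg
  have hA_eq : ∀ t ≥ (0:ℝ), ⟪X t, X 0⟫_ℝ = ‖X t‖ * ‖X 0‖ := by
    intro t ht
    have h := hA_sq t ht
    have hfact : (⟪X t, X 0⟫_ℝ - ‖X t‖ * ‖X 0‖) * (⟪X t, X 0⟫_ℝ + ‖X t‖ * ‖X 0‖) = 0 := by
      linear_combination h
    rcases mul_eq_zero.mp hfact with h' | h'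
    · linarith [sub_eq_zero.mp h']
    · have h1 := hA_nonneg t ht
      have h2 : (0:ℝ) ≤ ‖X t‖ * ‖X 0‖ := mul_nonneg (norm_nonneg _) (norm_nonneg _)
      linarith
  have hXray : ∀ t ≥ (0:ℝ), X t = (‖X t‖ / ‖X 0‖) • X 0 := by
    intro t ht
    have h := inner_eq_norm_mul_iff_real.mp (hA_eq t ht)
    calc X t = ‖X 0‖⁻¹ • (‖X 0‖ • X t) := (inv_smul_smul₀ h0.ne' _).symm
      _ = ‖X 0‖⁻¹ • (‖X t‖ • X 0) := by rw [h]
      _ = (‖X t‖ / ‖X 0‖) • X 0 := by rw [smul_smul, div_eq_inv_mul]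
  -- bound on the norm along the flow
  have hr_le : ∀ t ≥ (0:ℝ), ‖X t‖ ≤ c := by
    intro t ht
    have h : ‖X t‖ ≤ ‖X 0‖ := hr_anti self_mem_Ici ht ht
    exact h.trans h0'
  -- finite-time hitting
  have hlog0 : Real.log ‖X 0‖ ≤ -2 := by
    have := Real.log_le_log h0 h0'
    rwa [log_c] at this
  set T₀ : ℝ := ‖X 0‖ * (1 - Real.log ‖X 0‖) with hT₀def
  have hT0 : 0 ≤ T₀ := mul_nonneg h0.le (by linarith)
  have hhit : ∃ s ∈ Set.Icc (0:ℝ) T₀, X s = 0 := by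
    by_contra hcon
    push_neg at hcon
    have hφd : ∀ t ∈ Set.Ico (0:ℝ) T₀,
        HasDerivWithinAt (fun s => ‖X s‖ - ‖X s‖ * Real.log ‖X s‖ + s) 0 (Set.Ici t) t := by
      intro t ht
      have ht0 : (0:ℝ) ≤ t := ht.1
      have hXt : X t ≠ 0 := hcon t ⟨ht.1, ht.2.le⟩
      have hrpos : (0:ℝ) < ‖X t‖ := norm_pos_iff.mpr hXt
      have hrc : ‖X t‖ ≤ c := hr_le t ht0
      have hXdw : HasDerivWithinAt X (X' t) (Set.Ici t) t :=
        (hX' t ht0).mono (Set.Ici_subset_Ici.mpr ht0)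
      have hrd : HasDerivWithinAt (fun s => ‖X s‖) (-ft ‖X t‖) (Set.Ici t) t := by
        have h := (norm_hasFDerivAt hXt).comp_hasDerivWithinAt t hXdw
        refine h.congr_deriv (Eq.symm ?_)
        simp only [ContinuousLinearMap.smul_apply, innerSL_apply_apply, smul_eq_mul]
        rw [hXX' t ht0, real_inner_self_eq_norm_mul_norm]
        field_simp
      have hG : HasDerivAt (fun u : ℝ => u - u * Real.log u) (-Real.log ‖X t‖) ‖X t‖ := by
        have h1 := (hasDerivAt_id ‖X t‖).mul (Real.hasDerivAt_log hrpos.ne')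
        have h2 := (hasDerivAt_id ‖X t‖).sub h1
        refine h2.congr_deriv (Eq.symm ?_)
        simp only [id_eq, one_mul]
        rw [mul_inv_cancel₀ hrpos.ne']
        ring
      have hcomp := hG.comp_hasDerivWithinAt t hrd
      have hsum := hcomp.add (hasDerivWithinAt_id t (Set.Ici t))
      have hne : -Real.log ‖X t‖ ≠ 0 := (neg_log_pos hrpos hrc).ne'
      have hval : -Real.log ‖X t‖ * -ft ‖X t‖ + 1 = 0 := by
        rw [ft_eq hrc, mul_neg, mul_inv_cancel₀ hne]
        ring
      rw [hval] at hsum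
      exact hsum
    have hrcont : ContinuousOn (fun s => ‖X s‖) (Set.Icc 0 T₀) :=
      (hcontX.mono Set.Icc_subset_Ici_self).norm
    have hφcont : ContinuousOn (fun s => ‖X s‖ - ‖X s‖ * Real.log ‖X s‖ + s)
        (Set.Icc 0 T₀) := by
      apply ContinuousOn.add _ continuousOn_id
      apply hrcont.sub
      apply hrcont.mul
      apply hrcont.log
      intro s hs
      exact (norm_pos_iff.mpr (hcon s hs)).ne'
    have hconst := constant_of_has_deriv_right_zero hφcont hφd T₀ (Set.right_mem_Icc.mpr hT0)
    have hrTpos : (0:ℝ) < ‖X T₀‖ := norm_pos_iff.mpr (hcon T₀ ⟨hT0, le_rfl⟩)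
    have hrTc : ‖X T₀‖ ≤ c := hr_le T₀ hT0
    have hlogT : Real.log ‖X T₀‖ ≤ -2 := by
      have := Real.log_le_log hrTpos hrTc
      rwa [log_c] at this
    have h0val : ‖X 0‖ - ‖X 0‖ * Real.log ‖X 0‖ + 0 = T₀ := by
      rw [hT₀def]; ring
    rw [h0val] at hconst
    nlinarith [hconst, hrTpos, hlogT]
  obtain ⟨s₀, hs₀, hXs₀⟩ := hhit
  set Z : Set ℝ := Set.Icc (0:ℝ) T₀ ∩ X ⁻¹' {0} with hZdef
  have hZc : IsClosed Z :=
    (hcontX.mono Set.Icc_subset_Ici_self).preimage_isClosed_of_isClosed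
      isClosed_Icc isClosed_singleton
  have hZne : Z.Nonempty := ⟨s₀, hs₀, Set.mem_singleton_iff.mpr hXs₀⟩
  have hZbdd : BddBelow Z := ⟨0, fun z hz => hz.1.1⟩
  set T : ℝ := sInf Z with hTdef
  have hTZ : T ∈ Z := hZc.csInf_mem hZne hZbdd
  have hT0' : (0:ℝ) ≤ T := hTZ.1.1
  have hXT : X T = 0 := Set.mem_singleton_iff.mp hTZ.2
  have hbefore : ∀ t, 0 ≤ t → t < T → X t ≠ 0 := by
    intro t h1 h2 hx
    have hmem : t ∈ Z := ⟨⟨h1, h2.le.trans hTZ.1.2⟩, Set.mem_singleton_iff.mpr hx⟩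
    exact absurd (csInf_le hZbdd hmem) (not_le.mpr h2)
  have hint : IntervalIntegrable (fun t => ‖X' t‖) volume 0 T := by
    apply ContinuousOn.intervalIntegrable
    apply ContinuousOn.norm
    apply hX'cont.mono
    rw [Set.uIcc_of_le hT0']
    exact Set.Icc_subset_Ici_self
  have hderiv : ∀ t ∈ Set.Ioo (0:ℝ) T,
      HasDerivWithinAt (fun s => -‖X s‖) (‖X' t‖) (Set.Ioi t) t := by
    intro t ht
    have hXt : X t ≠ 0 := hbefore t ht.1.le ht.2
    have hrpos : (0:ℝ) < ‖X t‖ := norm_pos_iff.mpr hXt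
    have hrd : HasDerivAt (fun s => ‖X s‖) (-ft ‖X t‖) t := by
      have h := (norm_hasFDerivAt hXt).comp_hasDerivAt t (hXd t ht.1)
      refine h.congr_deriv (Eq.symm ?_)
      simp only [ContinuousLinearMap.smul_apply, innerSL_apply_apply, smul_eq_mul]
      rw [hXX' t ht.1.le, real_inner_self_eq_norm_mul_norm]
      field_simp
    have hXnorm : ‖X' t‖ = ft ‖X t‖ := by
      rw [hX'eq t ht.1.le, norm_neg, norm_smul, Real.norm_eq_abs, abs_of_nonneg (hκ t)]
      field_simp
    have h := hrd.neg.hasDerivWithinAt (s := Set.Ioi t)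
    rw [hXnorm, ← neg_neg (ft ‖X t‖)]
    exact h
  have hcontneg : ContinuousOn (fun s => -‖X s‖) (Set.Icc 0 T) := by
    apply ContinuousOn.neg
    apply ContinuousOn.norm
    exact hcontX.mono (Set.Icc_subset_Ici_self)
  have hmain := intervalIntegral.integral_eq_sub_of_hasDeriv_right_of_le hT0'
    hcontneg hderiv hint
  rw [hXT, norm_zero, neg_zero, zero_sub, neg_neg] at hmain
  refine ⟨fun t => ‖X t‖ / ‖X 0‖, div_self h0.ne', hXray, ?_, ?_, T, hT0', hXT, hmain⟩
  · intro t _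
    exact div_nonneg (norm_nonneg _) (norm_nonneg _)
  · intro s hs t ht hst
    have h : ‖X t‖ ≤ ‖X s‖ := hr_anti hs ht hst
    exact div_le_div_of_nonneg_right h h0.le
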